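/- (Uniqueness of right limits in the VCG family) Let P ⊆ ℝ²_+ be convex and let x(v), x̃(v) be two allocation rules with x(v), x̃(v) ∈ argmax_{y∈P} vᵗy for all v ∈ ℝ²_+. Then lim_{v'₁ ↓ v₁} x(v'₁, v₂) = lim_{v'₁ ↓ v₁} x̃(v'₁, v₂) whenever these right-hand limits exist (and they do exist and coincide). -/

import Mathlib

open Filter

private lemma aux_csInf_le {a : ℝ} {f g : ℝ → ℝ} (hb : BddBelow (f '' Set.Ioi a))
    (h : ∀ t ∈ Set.Ioi a, ∃ s ∈ Set.Ioi a, f s ≤ g t) :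
    sInf (f '' Set.Ioi a) ≤ sInf (g '' Set.Ioi a) := by
  apply le_csInf ((Set.nonempty_Ioi (a := a)).image g)
  rintro b ⟨t, ht, rfl⟩
  obtain ⟨s, hs, hle⟩ := h t ht
  exact (csInf_le hb (Set.mem_image_of_mem _ hs)).trans hle

private lemma aux_csSup_le {a : ℝ} {f g : ℝ → ℝ} (hb : BddAbove (f '' Set.Ioi a))
    (h : ∀ t ∈ Set.Ioi a, ∃ s ∈ Set.Ioi a, g t ≤ f s) :
    sSup (g '' Set.Ioi a) ≤ sSup (f '' Set.Ioi a) := by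
  apply csSup_le ((Set.nonempty_Ioi (a := a)).image g)
  rintro b ⟨t, ht, rfl⟩
  obtain ⟨s, hs, hle⟩ := h t ht
  exact hle.trans (le_csSup hb (Set.mem_image_of_mem _ hs))

theorem vcg_family_right_limit_unique
    (P : Set (ℝ × ℝ)) (hcomp : IsCompact P) (hconv : Convex ℝ P)
    (hpos : ∀ z ∈ P, 0 ≤ z.1 ∧ 0 ≤ z.2)
    (hdc : ∀ z ∈ P, ∀ w : ℝ × ℝ, 0 ≤ w.1 → 0 ≤ w.2 → w.1 ≤ z.1 → w.2 ≤ z.2 → w ∈ P)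
    (x xt : ℝ × ℝ → ℝ × ℝ)
    (hx : ∀ v : ℝ × ℝ, x v ∈ P ∧
      ∀ y ∈ P, v.1 * y.1 + v.2 * y.2 ≤ v.1 * (x v).1 + v.2 * (x v).2)
    (hxt : ∀ v : ℝ × ℝ, xt v ∈ P ∧
      ∀ y ∈ P, v.1 * y.1 + v.2 * y.2 ≤ v.1 * (xt v).1 + v.2 * (xt v).2)
    (v₁ v₂ : ℝ) (hv₁ : 0 ≤ v₁) (hv₂ : 0 < v₂) :
    ∃ L : ℝ × ℝ,
      Tendsto (fun t : ℝ => x (t, v₂)) (nhdsWithin v₁ (Set.Ioi v₁)) (nhds L) ∧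
      Tendsto (fun t : ℝ => xt (t, v₂)) (nhdsWithin v₁ (Set.Ioi v₁)) (nhds L) := by
  -- the exchange argument
  have key : ∀ (a b : ℝ × ℝ) (s t : ℝ), 0 ≤ s → s < t → a ∈ P → b ∈ P →
      (∀ p ∈ P, s * p.1 + v₂ * p.2 ≤ s * a.1 + v₂ * a.2) →
      (∀ p ∈ P, t * p.1 + v₂ * p.2 ≤ t * b.1 + v₂ * b.2) →
      a.1 ≤ b.1 ∧ b.2 ≤ a.2 := by
    intro a b s t hs hst ha hb hma hmb
    have h1 := hma b hb
    have h2 := hmb a ha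
    have hfst : a.1 ≤ b.1 := by nlinarith
    refine ⟨hfst, ?_⟩
    nlinarith [mul_nonneg hs (sub_nonneg.2 hfst)]
  have hpos' : ∀ s : ℝ, s ∈ Set.Ioi v₁ → 0 ≤ s := fun s hs => hv₁.trans hs.le
  set f : ℝ → ℝ := fun t => (x (t, v₂)).1 with hf
  set g : ℝ → ℝ := fun t => (x (t, v₂)).2 with hg
  set f' : ℝ → ℝ := fun t => (xt (t, v₂)).1 with hf'
  set g' : ℝ → ℝ := fun t => (xt (t, v₂)).2 with hg'
  -- cross comparison for arbitrary pairs of selections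
  have cross : ∀ (y z : ℝ × ℝ → ℝ × ℝ),
      (∀ v : ℝ × ℝ, y v ∈ P ∧ ∀ p ∈ P, v.1 * p.1 + v.2 * p.2 ≤ v.1 * (y v).1 + v.2 * (y v).2) →
      (∀ v : ℝ × ℝ, z v ∈ P ∧ ∀ p ∈ P, v.1 * p.1 + v.2 * p.2 ≤ v.1 * (z v).1 + v.2 * (z v).2) →
      ∀ s t : ℝ, v₁ < s → s < t →
        (y (s, v₂)).1 ≤ (z (t, v₂)).1 ∧ (z (t, v₂)).2 ≤ (y (s, v₂)).2 := by
    intro y z hy hz s t hs hst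
    exact key (y (s, v₂)) (z (t, v₂)) s t (hv₁.trans hs.le) hst (hy (s, v₂)).1
      (hz (t, v₂)).1 (hy (s, v₂)).2 (hz (t, v₂)).2
  -- boundedness of images
  have hsub : ∀ (y : ℝ × ℝ → ℝ × ℝ),
      (∀ v : ℝ × ℝ, y v ∈ P ∧ ∀ p ∈ P, v.1 * p.1 + v.2 * p.2 ≤ v.1 * (y v).1 + v.2 * (y v).2) →
      ((fun t => (y (t, v₂)).1) '' Set.Ioi v₁ ⊆ Prod.fst '' P) ∧
      ((fun t => (y (t, v₂)).2) '' Set.Ioi v₁ ⊆ Prod.snd '' P) := by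
    intro y hy
    constructor <;> rintro b ⟨t, _, rfl⟩
    · exact ⟨y (t, v₂), (hy (t, v₂)).1, rfl⟩
    · exact ⟨y (t, v₂), (hy (t, v₂)).1, rfl⟩
  have h1b : BddBelow (Prod.fst '' P) := (hcomp.image continuous_fst).bddBelow
  have h2a : BddAbove (Prod.snd '' P) := (hcomp.image continuous_snd).bddAbove
  have hbf : BddBelow (f '' Set.Ioi v₁) := h1b.mono (hsub x hx).1
  have hbf' : BddBelow (f' '' Set.Ioi v₁) := h1b.mono (hsub xt hxt).1
  have hbg : BddAbove (g '' Set.Ioi v₁) := h2a.mono (hsub x hx).2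
  have hbg' : BddAbove (g' '' Set.Ioi v₁) := h2a.mono (hsub xt hxt).2
  -- monotonicity
  have hmono : ∀ (y : ℝ × ℝ → ℝ × ℝ),
      (∀ v : ℝ × ℝ, y v ∈ P ∧ ∀ p ∈ P, v.1 * p.1 + v.2 * p.2 ≤ v.1 * (y v).1 + v.2 * (y v).2) →
      MonotoneOn (fun t => (y (t, v₂)).1) (Set.Ioi v₁) ∧
      AntitoneOn (fun t => (y (t, v₂)).2) (Set.Ioi v₁) := by
    intro y hy
    constructor <;> intro s hs t _ hst <;> rcases eq_or_lt_of_le hst with h | h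
    · rw [h]
    · exact (cross y y hy hy s t hs h).1
    · rw [h]
    · exact (cross y y hy hy s t hs h).2
  have tf : Tendsto f (nhdsWithin v₁ (Set.Ioi v₁)) (nhds (sInf (f '' Set.Ioi v₁))) :=
    (hmono x hx).1.tendsto_nhdsGT hbf
  have tg : Tendsto g (nhdsWithin v₁ (Set.Ioi v₁)) (nhds (sSup (g '' Set.Ioi v₁))) :=
    (hmono x hx).2.tendsto_nhdsGT hbg
  have tf' : Tendsto f' (nhdsWithin v₁ (Set.Ioi v₁)) (nhds (sInf (f' '' Set.Ioi v₁))) :=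
    (hmono xt hxt).1.tendsto_nhdsGT hbf'
  have tg' : Tendsto g' (nhdsWithin v₁ (Set.Ioi v₁)) (nhds (sSup (g' '' Set.Ioi v₁))) :=
    (hmono xt hxt).2.tendsto_nhdsGT hbg'
  -- picking a midpoint
  have hmid : ∀ t ∈ Set.Ioi v₁, (v₁ + t) / 2 ∈ Set.Ioi v₁ ∧ (v₁ + t) / 2 < t := by
    intro t ht
    constructor
    · simpa using by linarith [Set.mem_Ioi.1 ht]
    · linarith [Set.mem_Ioi.1 ht]
  -- equality of limits
  have hinf : sInf (f '' Set.Ioi v₁) = sInf (f' '' Set.Ioi v₁) := by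
    apply le_antisymm
    · apply aux_csInf_le hbf
      intro t ht
      obtain ⟨hm, hmt⟩ := hmid t ht
      exact ⟨_, hm, (cross x xt hx hxt _ t hm hmt).1⟩
    · apply aux_csInf_le hbf'
      intro t ht
      obtain ⟨hm, hmt⟩ := hmid t ht
      exact ⟨_, hm, (cross xt x hxt hx _ t hm hmt).1⟩
  have hsup : sSup (g '' Set.Ioi v₁) = sSup (g' '' Set.Ioi v₁) := by
    apply le_antisymm
    · apply aux_csSup_le hbg'
      intro t ht
      obtain ⟨hm, hmt⟩ := hmid t ht
      exact ⟨_, hm, (cross xt x hxt hx _ t hm hmt).2⟩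
    · apply aux_csSup_le hbg
      intro t ht
      obtain ⟨hm, hmt⟩ := hmid t ht
      exact ⟨_, hm, (cross x xt hx hxt _ t hm hmt).2⟩
  refine ⟨(sInf (f '' Set.Ioi v₁), sSup (g '' Set.Ioi v₁)), ?_, ?_⟩
  · exact tf.prodMk_nhds tg
  · rw [hinf, hsup]
    exact tf'.prodMk_nhds tg'
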